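/- Let (A,·) be a finite-dimensional (nonunital) associative algebra over a field F and let ∘ be an associative product on the dual space A*. Then there exists an associative product * on the direct sum vector space A ⊕ A* restricting to · on A and to ∘ on A* such that the natural symmetric bilinear form B(x+a*, y+b*) = ⟨x,b*⟩ + ⟨a*,y⟩ is invariant (i.e. B(u*v, w) = B(u, v*w) for all u,v,w ∈ A ⊕ A*) if and only if (A, A*, R·*, L·*, R∘*, L∘*) is a matched pair of associative algebras; in that case * is given by (x+a*)*(y+b*) = (x·y + R∘*(a*)y + L∘*(b*)x) + (a*∘b* + R·*(x)b* + L·*(y)a*). -/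

import Mathlib

open TensorProduct LinearMap

section Prelude
variable {F : Type*} [Field F]

/-- Associativity of a (nonunital) bilinear product. -/
def IsAssocMul {A : Type*} [AddCommGroup A] [Module F A]
    (m : A →ₗ[F] A →ₗ[F] A) : Prop :=
  ∀ x y z, m (m x y) z = m x (m y z)

/-- `(l, r, V)` is a bimodule of the associative algebra `(A, m)`. -/
def IsBimodule {A V : Type*} [AddCommGroup A] [Module F A]
    [AddCommGroup V] [Module F V]
    (m : A →ₗ[F] A →ₗ[F] A) (l r : A →ₗ[F] V →ₗ[F] V) : Prop :=
  (∀ x y v, l (m x y) v = l x (l y v)) ∧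
  (∀ x y v, r (m x y) v = r y (r x v)) ∧
  (∀ x y v, l x (r y v) = r y (l x v))

/-- `(A, B, lA, rA, lB, rB)` is a matched pair of associative algebras. -/
def IsMatchedPair {A B : Type*} [AddCommGroup A] [Module F A]
    [AddCommGroup B] [Module F B]
    (mA : A →ₗ[F] A →ₗ[F] A) (mB : B →ₗ[F] B →ₗ[F] B)
    (lA rA : A →ₗ[F] B →ₗ[F] B) (lB rB : B →ₗ[F] A →ₗ[F] A) : Prop :=
  IsAssocMul mA ∧ IsAssocMul mB ∧ IsBimodule mA lA rA ∧ IsBimodule mB lB rB ∧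
  (∀ x a b, lA x (mB a b) = lA (rB a x) b + mB (lA x a) b) ∧
  (∀ x a b, rA x (mB a b) = rA (lB b x) a + mB a (rA x b)) ∧
  (∀ a x y, lB a (mA x y) = lB (rA x a) y + mA (lB a x) y) ∧
  (∀ a x y, rB a (mA x y) = rB (lA y a) x + mA x (rB a y)) ∧
  (∀ x a b, lA (lB a x) b + mB (rA x a) b - rA (rB b x) a - mB a (lA x b) = 0) ∧
  (∀ a x y, lB (lA x a) y + mA (rB a x) y - rB (rA y a) x - mA x (lB a y) = 0)

/-- Dendriform algebra axioms for a pair of bilinear products `≻ = s`, `≺ = p`. -/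
def IsDendriform {A : Type*} [AddCommGroup A] [Module F A]
    (s p : A →ₗ[F] A →ₗ[F] A) : Prop :=
  (∀ x y z, p (p x y) z = p x (s y z + p y z)) ∧
  (∀ x y z, p (s x y) z = s x (p y z)) ∧
  (∀ x y z, s x (s y z) = s (s x y + p x y) z)

/-- The pairing of `f ⊗ g ∈ A* ⊗ A*` with elements of `A ⊗ A`. -/
noncomputable def pair2 {A : Type*} [AddCommGroup A] [Module F A]
    (f g : Module.Dual F A) : (A ⊗[F] A) →ₗ[F] F :=
  (TensorProduct.lid F F).toLinearMap ∘ₗ TensorProduct.map f g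

/-- `t12 m (r ⊗ s)` is `r₁₂ ∙ s₁₃`: on `(x ⊗ y) ⊗ (x' ⊗ y')` it gives `m x x' ⊗ y ⊗ y'`. -/
noncomputable def t12 {A : Type*} [AddCommGroup A] [Module F A]
    (m : A →ₗ[F] A →ₗ[F] A) :
    ((A ⊗[F] A) ⊗[F] (A ⊗[F] A)) →ₗ[F] A ⊗[F] (A ⊗[F] A) :=
  TensorProduct.map (TensorProduct.lift m) LinearMap.id ∘ₗ
    (TensorProduct.tensorTensorTensorComm F A A A A).toLinearMap

/-- `t13 m (r ⊗ s)` is `r₁₃ ∙ s₂₃`: on `(x ⊗ y) ⊗ (x' ⊗ y')` it gives `x ⊗ x' ⊗ m y y'`. -/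
noncomputable def t13 {A : Type*} [AddCommGroup A] [Module F A]
    (m : A →ₗ[F] A →ₗ[F] A) :
    ((A ⊗[F] A) ⊗[F] (A ⊗[F] A)) →ₗ[F] A ⊗[F] (A ⊗[F] A) :=
  (TensorProduct.assoc F A A A).toLinearMap ∘ₗ
    TensorProduct.map LinearMap.id (TensorProduct.lift m) ∘ₗ
    (TensorProduct.tensorTensorTensorComm F A A A A).toLinearMap

/-- `t23 m (r ⊗ s)` is `r₂₃ ∙ s₁₂`: on `(x ⊗ y) ⊗ (x' ⊗ y')` it gives `x' ⊗ m x y' ⊗ y`. -/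
noncomputable def t23 {A : Type*} [AddCommGroup A] [Module F A]
    (m : A →ₗ[F] A →ₗ[F] A) :
    ((A ⊗[F] A) ⊗[F] (A ⊗[F] A)) →ₗ[F] A ⊗[F] (A ⊗[F] A) :=
  (TensorProduct.leftComm F A A A).toLinearMap ∘ₗ
    TensorProduct.map LinearMap.id (TensorProduct.comm F A A).toLinearMap ∘ₗ
    TensorProduct.map (TensorProduct.lift m) LinearMap.id ∘ₗ
    (TensorProduct.tensorTensorTensorComm F A A A A).toLinearMap ∘ₗ
    TensorProduct.map LinearMap.id (TensorProduct.comm F A A).toLinearMap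

/-- `aybE m r = r₁₂r₁₃ + r₁₃r₂₃ − r₂₃r₁₂`, the associative Yang–Baxter expression. -/
noncomputable def aybE {A : Type*} [AddCommGroup A] [Module F A]
    (m : A →ₗ[F] A →ₗ[F] A) (r : A ⊗[F] A) : A ⊗[F] (A ⊗[F] A) :=
  t12 m (r ⊗ₜ r) + t13 m (r ⊗ₜ r) - t23 m (r ⊗ₜ r)

end Prelude


/-- An associative product `M` on `A ⊕ A*` restricting to `mA` on `A` and to
`circ` on `A*`, for which the natural symmetric bilinear form
`B(x+a*, y+b*) = ⟨x,b*⟩ + ⟨a*,y⟩` is invariant. -/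
def IsFrobeniusDoubleProduct {F A : Type*} [Field F] [AddCommGroup A] [Module F A]
    (mA : A →ₗ[F] A →ₗ[F] A)
    (circ : Module.Dual F A →ₗ[F] Module.Dual F A →ₗ[F] Module.Dual F A)
    (M : (A × Module.Dual F A) →ₗ[F] (A × Module.Dual F A) →ₗ[F]
      (A × Module.Dual F A)) : Prop :=
  IsAssocMul M ∧
  (∀ x y : A, M (x, 0) (y, 0) = (mA x y, 0)) ∧
  (∀ a b : Module.Dual F A, M (0, a) (0, b) = (0, circ a b)) ∧
  (∀ u v w : A × Module.Dual F A,
    w.2 (M u v).1 + (M u v).2 w.1 = (M v w).2 u.1 + u.2 (M v w).1)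


section Aux

variable {F A : Type*} [Field F] [AddCommGroup A] [Module F A]

lemma aux_sep {x y : A} (h : ∀ f : Module.Dual F A, f x = f y) : x = y := by
  rw [← sub_eq_zero, ← Module.forall_dual_apply_eq_zero_iff F (x - y)]
  intro f; simp [h f]

variable (mA : A →ₗ[F] A →ₗ[F] A)
  (circ : Module.Dual F A →ₗ[F] Module.Dual F A →ₗ[F] Module.Dual F A)
  (Rd Ld : A →ₗ[F] Module.Dual F A →ₗ[F] Module.Dual F A)
  (Ro Lo : Module.Dual F A →ₗ[F] A →ₗ[F] A)

def auxM : (A × Module.Dual F A) →ₗ[F] (A × Module.Dual F A) →ₗ[F] (A × Module.Dual F A) :=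
  LinearMap.mk₂ F
    (fun u v => (mA u.1 v.1 + Ro u.2 v.1 + Lo v.2 u.1,
      circ u.2 v.2 + Rd u.1 v.2 + Ld v.1 u.2))
    (by intro m₁ m₂ n
        simp only [Prod.fst_add, Prod.snd_add, map_add, LinearMap.add_apply, Prod.mk_add_mk,
          Prod.mk.injEq]
        constructor <;> abel)
    (by intro c m n
        simp only [Prod.smul_fst, Prod.smul_snd, map_smul, LinearMap.smul_apply, Prod.smul_mk,
          Prod.mk.injEq, smul_add])
    (by intro m n₁ n₂
        simp only [Prod.fst_add, Prod.snd_add, map_add, LinearMap.add_apply, Prod.mk_add_mk,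
          Prod.mk.injEq]
        constructor <;> abel)
    (by intro c m n
        simp only [Prod.smul_fst, Prod.smul_snd, map_smul, LinearMap.smul_apply, Prod.smul_mk,
          Prod.mk.injEq, smul_add])

@[simp] lemma auxM_apply (u v : A × Module.Dual F A) :
    auxM mA circ Rd Ld Ro Lo u v = (mA u.1 v.1 + Ro u.2 v.1 + Lo v.2 u.1,
      circ u.2 v.2 + Rd u.1 v.2 + Ld v.1 u.2) := rfl

end Aux

section Aux2
variable {F A : Type*} [Field F] [AddCommGroup A] [Module F A]
  (mA : A →ₗ[F] A →ₗ[F] A)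
  (circ : Module.Dual F A →ₗ[F] Module.Dual F A →ₗ[F] Module.Dual F A)
  (Rd Ld : A →ₗ[F] Module.Dual F A →ₗ[F] Module.Dual F A)
  (Ro Lo : Module.Dual F A →ₗ[F] A →ₗ[F] A)

/-- Uniqueness: any Frobenius double product is given by the explicit formula. -/
lemma aux_key
    (hRd : ∀ (x y : A) (a : Module.Dual F A), Rd x a y = a (mA y x))
    (hLd : ∀ (x y : A) (a : Module.Dual F A), Ld x a y = a (mA x y))
    (hRo : ∀ (a b : Module.Dual F A) (x : A), b (Ro a x) = circ b a x)
    (hLo : ∀ (a b : Module.Dual F A) (x : A), b (Lo a x) = circ a b x)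
    (M : (A × Module.Dual F A) →ₗ[F] (A × Module.Dual F A) →ₗ[F] (A × Module.Dual F A))
    (hM : IsFrobeniusDoubleProduct mA circ M) :
    ∀ u v : A × Module.Dual F A, M u v =
      (mA u.1 v.1 + Ro u.2 v.1 + Lo v.2 u.1,
       circ u.2 v.2 + Rd u.1 v.2 + Ld v.1 u.2) := by
  obtain ⟨hAs, hAA, hDD, hInv⟩ := hM
  have hAD : ∀ (x : A) (b : Module.Dual F A), M (x, 0) (0, b) = (Lo b x, Rd x b) := by
    intro x b
    refine Prod.ext ?_ ?_
    · apply aux_sep (F := F); intro c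
      have h := hInv (x, 0) (0, b) (0, c)
      rw [hDD] at h
      simp only [Prod.fst, Prod.snd, map_zero, LinearMap.zero_apply, add_zero,
        zero_add] at h
      simpa [hLo] using h
    · refine LinearMap.ext fun y => ?_
      have h := hInv (y, 0) (x, 0) (0, b)
      rw [hAA] at h
      simp only [Prod.fst, Prod.snd, map_zero, LinearMap.zero_apply, add_zero,
        zero_add] at h
      simpa [hRd] using h.symm
  have hDA : ∀ (a : Module.Dual F A) (y : A), M (0, a) (y, 0) = (Ro a y, Ld y a) := by
    intro a y
    refine Prod.ext ?_ ?_
    · apply aux_sep (F := F); intro c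
      have h := hInv (0, c) (0, a) (y, 0)
      rw [hDD] at h
      simp only [Prod.fst, Prod.snd, map_zero, LinearMap.zero_apply, add_zero,
        zero_add] at h
      simpa [hRo] using h.symm
    · refine LinearMap.ext fun z => ?_
      have h := hInv (0, a) (y, 0) (z, 0)
      rw [hAA] at h
      simp only [Prod.fst, Prod.snd, map_zero, LinearMap.zero_apply, add_zero,
        zero_add] at h
      simpa [hLd] using h
  intro u v
  obtain ⟨x, a⟩ := u; obtain ⟨y, b⟩ := v
  have hx : (x, a) = ((x, 0) : A × Module.Dual F A) + (0, a) := by simp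
  have hy : (y, b) = ((y, 0) : A × Module.Dual F A) + (0, b) := by simp
  show M (x, a) (y, b) = (mA x y + Ro a y + Lo b x, circ a b + Rd x b + Ld y a)
  rw [hx, hy]
  simp only [map_add, LinearMap.add_apply]
  rw [hAA, hAD, hDA, hDD]
  refine Prod.ext ?_ ?_ <;>
    simp only [Prod.fst_add, Prod.snd_add] <;> abel


lemma aux_assoc (h : IsMatchedPair mA circ Rd Ld Ro Lo) :
    IsAssocMul (auxM mA circ Rd Ld Ro Lo) := by
  obtain ⟨hA, hC, ⟨hB1l, hB1r, hB1c⟩, ⟨hB2l, hB2r, hB2c⟩, h5, h6, h7, h8, h9, h10⟩ := h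
  rintro ⟨x, a⟩ ⟨y, b⟩ ⟨z, c⟩
  simp only [auxM_apply, Prod.fst, Prod.snd]
  refine Prod.ext ?_ ?_
  · show mA (mA x y + Ro a y + Lo b x) z + Ro (circ a b + Rd x b + Ld y a) z +
      Lo c (mA x y + Ro a y + Lo b x) =
      mA x (mA y z + Ro b z + Lo c y) + Ro a (mA y z + Ro b z + Lo c y) +
      Lo (circ b c + Rd y c + Ld z b) x
    apply aux_sep (F := F); intro f
    have e1 := congrArg f (hA x y z)
    have e2 := congrArg f (h7 a y z)
    have e3 := congrArg f (h10 b x z)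
    have e4 := congrArg f (h8 c x y)
    have e5 := congrArg f (hB2l a b z)
    have e6 := congrArg f (hB2c a c y)
    have e7 := congrArg f (hB2r b c x)
    simp only [map_add, map_sub, map_zero, LinearMap.add_apply, LinearMap.sub_apply,
      LinearMap.zero_apply] at e1 e2 e3 e4 e5 e6 e7 ⊢
    linear_combination e1 - e2 + e3 + e4 + e5 - e6 - e7
  · show circ (circ a b + Rd x b + Ld y a) c + Rd (mA x y + Ro a y + Lo b x) c +
      Ld z (circ a b + Rd x b + Ld y a) =
      circ a (circ b c + Rd y c + Ld z b) + Rd x (circ b c + Rd y c + Ld z b) +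
      Ld (mA y z + Ro b z + Lo c y) a
    refine LinearMap.ext fun t => ?_
    have e1 := DFunLike.congr_fun (hC a b c) t
    have e2 := DFunLike.congr_fun (h5 x b c) t
    have e3 := DFunLike.congr_fun (h9 y a c) t
    have e4 := DFunLike.congr_fun (h6 z a b) t
    have e5 := DFunLike.congr_fun (hB1l x y c) t
    have e6 := DFunLike.congr_fun (hB1c x z b) t
    have e7 := DFunLike.congr_fun (hB1r y z a) t
    simp only [map_add, map_sub, map_zero, LinearMap.add_apply, LinearMap.sub_apply,
      LinearMap.zero_apply] at e1 e2 e3 e4 e5 e6 e7 ⊢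
    linear_combination e1 - e2 + e3 + e4 + e5 - e6 - e7

lemma aux_frob
    (hRd : ∀ (x y : A) (a : Module.Dual F A), Rd x a y = a (mA y x))
    (hLd : ∀ (x y : A) (a : Module.Dual F A), Ld x a y = a (mA x y))
    (hRo : ∀ (a b : Module.Dual F A) (x : A), b (Ro a x) = circ b a x)
    (hLo : ∀ (a b : Module.Dual F A) (x : A), b (Lo a x) = circ a b x)
    (hAssoc : IsAssocMul (auxM mA circ Rd Ld Ro Lo)) :
    IsFrobeniusDoubleProduct mA circ (auxM mA circ Rd Ld Ro Lo) := by
  refine ⟨hAssoc, ?_, ?_, ?_⟩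
  · intro x y; simp [auxM_apply]
  · intro a b; simp [auxM_apply]
  · intro u v w
    simp only [auxM_apply, Prod.fst, Prod.snd, map_add, LinearMap.add_apply]
    simp only [hRo, hLo, hRd, hLd]
    ring

lemma aux_matched (hA : IsAssocMul mA) (hC : IsAssocMul circ)
    (hRd : ∀ (x y : A) (a : Module.Dual F A), Rd x a y = a (mA y x))
    (hLd : ∀ (x y : A) (a : Module.Dual F A), Ld x a y = a (mA x y))
    (hRo : ∀ (a b : Module.Dual F A) (x : A), b (Ro a x) = circ b a x)
    (hLo : ∀ (a b : Module.Dual F A) (x : A), b (Lo a x) = circ a b x)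
    (hP : IsAssocMul (auxM mA circ Rd Ld Ro Lo)) :
    IsMatchedPair mA circ Rd Ld Ro Lo := by
  have hA' : ∀ x y z, mA (mA x y) z = mA x (mA y z) := hA
  have hC' : ∀ a b c, circ (circ a b) c = circ a (circ b c) := hC
  refine ⟨hA, hC, ⟨?_, ?_, ?_⟩, ⟨?_, ?_, ?_⟩, ?_, ?_, ?_, ?_, ?_, ?_⟩
  · intro x y a; refine LinearMap.ext fun z => ?_; simp only [hRd, hA']
  · intro x y a; refine LinearMap.ext fun z => ?_; simp only [hLd, hA']
  · intro x y a; refine LinearMap.ext fun z => ?_; simp only [hRd, hLd, hA']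
  · intro a b x; apply aux_sep (F := F); intro f; simp only [hRo, hLo, hC']
  · intro a b x; apply aux_sep (F := F); intro f; simp only [hRo, hLo, hC']
  · intro a b x; apply aux_sep (F := F); intro f; simp only [hRo, hLo, hC']
  · -- h5 : Rd x (circ a b) = Rd (Lo a x) b + circ (Rd x a) b
    intro x a b
    have h := congrArg Prod.snd (hP (x, 0) (0, a) (0, b))
    simp only [auxM_apply, Prod.fst, Prod.snd, map_zero, LinearMap.zero_apply, add_zero,
      zero_add, LinearMap.map_zero] at h
    refine LinearMap.ext fun t => ?_
    have ht := DFunLike.congr_fun h t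
    simp only [LinearMap.add_apply, map_add] at ht ⊢
    linear_combination -ht
  · -- h6 : Ld x (circ a b) = Ld (Ro b x) a + circ a (Ld x b)
    intro x a b
    have h := congrArg Prod.snd (hP (0, a) (0, b) (x, 0))
    simp only [auxM_apply, Prod.fst, Prod.snd, map_zero, LinearMap.zero_apply, add_zero,
      zero_add, LinearMap.map_zero] at h
    refine LinearMap.ext fun t => ?_
    have ht := DFunLike.congr_fun h t
    simp only [LinearMap.add_apply, map_add] at ht ⊢
    linear_combination ht
  · -- h7 : Ro a (mA x y) = Ro (Ld x a) y + mA (Ro a x) y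
    intro a x y
    have h := congrArg Prod.fst (hP (0, a) (x, 0) (y, 0))
    simp only [auxM_apply, Prod.fst, Prod.snd, map_zero, LinearMap.zero_apply, add_zero,
      zero_add, LinearMap.map_zero] at h
    apply aux_sep (F := F); intro f
    have hf := congrArg f h
    simp only [map_add] at hf ⊢
    linear_combination -hf
  · -- h8 : Lo a (mA x y) = Lo (Rd y a) x + mA x (Lo a y)
    intro a x y
    have h := congrArg Prod.fst (hP (x, 0) (y, 0) (0, a))
    simp only [auxM_apply, Prod.fst, Prod.snd, map_zero, LinearMap.zero_apply, add_zero,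
      zero_add, LinearMap.map_zero] at h
    apply aux_sep (F := F); intro f
    have hf := congrArg f h
    simp only [map_add] at hf ⊢
    linear_combination hf
  · -- h9
    intro x a b
    have h := congrArg Prod.snd (hP (0, a) (x, 0) (0, b))
    simp only [auxM_apply, Prod.fst, Prod.snd, map_zero, LinearMap.zero_apply, add_zero,
      zero_add, LinearMap.map_zero] at h
    refine LinearMap.ext fun t => ?_
    have ht := DFunLike.congr_fun h t
    simp only [LinearMap.add_apply, LinearMap.sub_apply, LinearMap.zero_apply, map_add] at ht ⊢
    linear_combination ht
  · -- h10
    intro a x y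
    have h := congrArg Prod.fst (hP (x, 0) (0, a) (y, 0))
    simp only [auxM_apply, Prod.fst, Prod.snd, map_zero, LinearMap.zero_apply, add_zero,
      zero_add, LinearMap.map_zero] at h
    apply aux_sep (F := F); intro f
    have hf := congrArg f h
    simp only [map_add, map_sub, map_zero, LinearMap.sub_apply, LinearMap.add_apply,
      LinearMap.zero_apply] at hf ⊢
    linear_combination hf

end Aux2

/-- there is a double construction of Frobenius algebra associated to
`(A,·)` and `(A*,∘)` iff `(A, A*, R·*, L·*, R∘*, L∘*)` is a matched pair of
associative algebras, in which case the product is given by the explicit formula. -/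
theorem frobenius_double_iff_matchedPair
    {F A : Type*} [Field F] [AddCommGroup A] [Module F A] [FiniteDimensional F A]
    (mA : A →ₗ[F] A →ₗ[F] A) (hA : IsAssocMul mA)
    (circ : Module.Dual F A →ₗ[F] Module.Dual F A →ₗ[F] Module.Dual F A)
    (hC : IsAssocMul circ)
    -- the dual operators `R·*`, `L·*` on `A*`
    (Rd Ld : A →ₗ[F] Module.Dual F A →ₗ[F] Module.Dual F A)
    (hRd : ∀ (x y : A) (a : Module.Dual F A), Rd x a y = a (mA y x))
    (hLd : ∀ (x y : A) (a : Module.Dual F A), Ld x a y = a (mA x y))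
    -- the dual operators `R∘*`, `L∘*` on `A`
    (Ro Lo : Module.Dual F A →ₗ[F] A →ₗ[F] A)
    (hRo : ∀ (a b : Module.Dual F A) (x : A), b (Ro a x) = circ b a x)
    (hLo : ∀ (a b : Module.Dual F A) (x : A), b (Lo a x) = circ a b x) :
    ((∃ M, IsFrobeniusDoubleProduct mA circ M) ↔
      IsMatchedPair mA circ Rd Ld Ro Lo) ∧
    (∀ M, IsFrobeniusDoubleProduct mA circ M →
      ∀ u v : A × Module.Dual F A, M u v =
        (mA u.1 v.1 + Ro u.2 v.1 + Lo v.2 u.1,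
         circ u.2 v.2 + Rd u.1 v.2 + Ld v.1 u.2)) := by
  have key := aux_key mA circ Rd Ld Ro Lo hRd hLd hRo hLo
  refine ⟨⟨?_, ?_⟩, fun M hM => key M hM⟩
  · rintro ⟨M, hM⟩
    have hMe : ∀ u v, M u v = auxM mA circ Rd Ld Ro Lo u v := fun u v =>
      (key M hM u v).trans (auxM_apply mA circ Rd Ld Ro Lo u v).symm
    have hP : IsAssocMul (auxM mA circ Rd Ld Ro Lo) := by
      intro u v w
      rw [← hMe u v, ← hMe v w, ← hMe (M u v) w, ← hMe u (M v w)]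
      exact hM.1 u v w
    exact aux_matched mA circ Rd Ld Ro Lo hA hC hRd hLd hRo hLo hP
  · intro h
    exact ⟨auxM mA circ Rd Ld Ro Lo,
      aux_frob mA circ Rd Ld Ro Lo hRd hLd hRo hLo (aux_assoc mA circ Rd Ld Ro Lo h)⟩
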